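/- arXiv:0911.2369 — 2 statements merged into one kernel-verified Lean document; each statement's English description precedes it below -/
import Mathlib

section
/- For any derivation D of the Poisson algebra Sym(Γ) of the Heisenberg Lie algebra Γ such that D(V) ⊆ V and D(z) = 0, there exists a unique element a_D ∈ z^{−1}·V·Sym(V) (inside the localization of Sym(Γ) at z) satisfying D(P) = {a_D, P} for every P ∈ Sym(Γ). -/
/-!
Statement 9 (Lemma 2.4 of A.N. Panov, "Reduction of spherical functions").

Setting.  `K` is a field of characteristic zero and `Γ` is the Heisenberg Lie
algebra with basis `x 1, …, x n, y 1, …, y n, z` and relations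
`[x i, y j] = δ i j • z`, `[x i, z] = [y j, z] = 0`.  Its symmetric algebra
`Sym Γ` is modelled as `MvPolynomial ((Fin n ⊕ Fin n) ⊕ Unit) K`, where
`X (inl (inl i)) = x i`, `X (inl (inr j)) = y j` and `X (inr ()) = z`, and it
carries the linear Poisson bracket `hbr` (defined below via partial
derivatives; it coincides with the Lie bracket on `Γ`, and `z` is central).
`V` is the span of the `x i, y j`, so that `V • Sym V` is the set of
polynomials in the `x, y`-variables with zero constant term.

`D` is a derivation of the Poisson algebra `Sym Γ`: a linear map satisfying
the Leibniz rule for the product (`hDmul`) and for the Poisson bracket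
(`hDbr`), such that `D V ⊆ V` (`hDV`) and `D z = 0` (`hDz`).

Conclusion (Lemma 2.4): there exists a unique element
`a_D ∈ z⁻¹ • (V • Sym V)` of the localization of `Sym Γ` at `z` with
`D P = {a_D, P}` for all `P ∈ Sym Γ`.  Since `z` is a central nonzerodivisor,
this is stated equivalently inside `Sym Γ`: there is a unique `a ∈ V • Sym V`
(i.e. `a` lies in the subalgebra generated by the `x, y`-variables and has
zero constant term, and `a_D = z⁻¹ a`) such that
`z * D P = {a, P}` for all `P`.
-/

open MvPolynomial

/-- The linear Poisson bracket of `Sym Γ` for the Heisenberg Lie algebra `Γ`: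
`{P, Q} = z * Σ_i (∂P/∂x_i ∂Q/∂y_i - ∂P/∂y_i ∂Q/∂x_i)`. -/
noncomputable def heisBracket {K : Type} [Field K] {n : ℕ}
    (P Q : MvPolynomial ((Fin n ⊕ Fin n) ⊕ Unit) K) :
    MvPolynomial ((Fin n ⊕ Fin n) ⊕ Unit) K :=
  X (Sum.inr ()) *
    ∑ i : Fin n,
      (pderiv (Sum.inl (Sum.inl i)) P * pderiv (Sum.inl (Sum.inr i)) Q -
        pderiv (Sum.inl (Sum.inr i)) P * pderiv (Sum.inl (Sum.inl i)) Q)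

namespace Lemma24Aux


variable {K : Type} [Field K] {n : ℕ}

lemma coeff_pderiv {σ : Type*} (v : σ) (m : σ →₀ ℕ) (p : MvPolynomial σ K) :
    coeff m (pderiv v p) = ((m v : K) + 1) * coeff (m + Finsupp.single v 1) p := by
  classical
  induction p using MvPolynomial.induction_on' with
  | add p q hp hq => simp [hp, hq, mul_add]
  | monomial s a =>
    rw [pderiv_monomial, coeff_monomial, coeff_monomial]
    by_cases h : s = m + Finsupp.single v 1
    · subst h
      have h1 : m + Finsupp.single v 1 - Finsupp.single v 1 = m := by
        ext w; simp
      have h2 : ((m + Finsupp.single v 1 : σ →₀ ℕ) v) = m v + 1 := by simp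
      rw [h1, h2]
      simp
      ring
    · rw [if_neg h, mul_zero]
      by_cases h2 : s - Finsupp.single v 1 = m
      · rw [if_pos h2]
        have hsv : s v = 0 := by
          by_contra hsv
          apply h
          rw [← h2, tsub_add_cancel_of_le]
          rwa [Finsupp.single_le_iff, Nat.one_le_iff_ne_zero]
        simp [hsv]
      · rw [if_neg h2]

lemma eq_C_of_pderiv_eq_zero [CharZero K] {σ : Type*} {p : MvPolynomial σ K}
    (h : ∀ v, pderiv v p = 0) : p = C (constantCoeff p) := by
  classical
  ext m
  by_cases hm : m = 0
  · subst hm; simp [coeff_C, constantCoeff_eq]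
  · rw [coeff_C, if_neg (Ne.symm hm)]
    obtain ⟨v, hv⟩ : ∃ v, m v ≠ 0 := by
      by_contra hc
      push_neg at hc
      exact hm (Finsupp.ext hc)
    have h1 : Finsupp.single v 1 ≤ m := by
      rwa [Finsupp.single_le_iff, Nat.one_le_iff_ne_zero]
    have := coeff_pderiv (K := K) v (m - Finsupp.single v 1) p
    rw [h v, tsub_add_cancel_of_le h1] at this
    have hne : ((((m - Finsupp.single v 1 : σ →₀ ℕ) v : K)) + 1) ≠ 0 := by
      exact Nat.cast_add_one_ne_zero _
    simpa [coeff_zero, hne, eq_comm] using (mul_eq_zero.mp this.symm).resolve_left hne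

/-- `heisBracket` as a linear map in its first argument. -/
noncomputable def hbL (Q : MvPolynomial ((Fin n ⊕ Fin n) ⊕ Unit) K) :
    MvPolynomial ((Fin n ⊕ Fin n) ⊕ Unit) K →ₗ[K] MvPolynomial ((Fin n ⊕ Fin n) ⊕ Unit) K where
  toFun P := heisBracket P Q
  map_add' P P' := by
    unfold heisBracket
    simp only [map_add]
    rw [← mul_add, ← Finset.sum_add_distrib]
    congr 1
    refine Finset.sum_congr rfl fun i _ => by ring
  map_smul' c P := by
    unfold heisBracket
    simp only [Derivation.map_smul, RingHom.id_apply, smul_mul_assoc, ← smul_sub,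
      ← Finset.smul_sum, mul_smul_comm]

lemma hbL_apply (Q P : MvPolynomial ((Fin n ⊕ Fin n) ⊕ Unit) K) : hbL Q P = heisBracket P Q := rfl

lemma hb_antisymm (P Q : MvPolynomial ((Fin n ⊕ Fin n) ⊕ Unit) K) :
    heisBracket P Q = -heisBracket Q P := by
  unfold heisBracket
  rw [← mul_neg, ← Finset.sum_neg_distrib]
  congr 1
  refine Finset.sum_congr rfl fun i _ => by ring

lemma hb_xx (i j : Fin n) :
    heisBracket (X (Sum.inl (Sum.inl i)) : MvPolynomial ((Fin n ⊕ Fin n) ⊕ Unit) K)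
      (X (Sum.inl (Sum.inl j))) = 0 := by
  classical
  unfold heisBracket
  simp [pderiv_X, Pi.single_apply]

lemma hb_yy (i j : Fin n) :
    heisBracket (X (Sum.inl (Sum.inr i)) : MvPolynomial ((Fin n ⊕ Fin n) ⊕ Unit) K)
      (X (Sum.inl (Sum.inr j))) = 0 := by
  classical
  unfold heisBracket
  simp [pderiv_X, Pi.single_apply]

lemma hb_xy (i j : Fin n) :
    heisBracket (X (Sum.inl (Sum.inl i)) : MvPolynomial ((Fin n ⊕ Fin n) ⊕ Unit) K)
      (X (Sum.inl (Sum.inr j))) = if i = j then X (Sum.inr ()) else 0 := by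
  classical
  unfold heisBracket
  simp [pderiv_X, Pi.single_apply, Finset.mul_sum]

lemma hb_yx (i j : Fin n) :
    heisBracket (X (Sum.inl (Sum.inr i)) : MvPolynomial ((Fin n ⊕ Fin n) ⊕ Unit) K)
      (X (Sum.inl (Sum.inl j))) = if i = j then -X (Sum.inr ()) else 0 := by
  rw [hb_antisymm, hb_xy]
  split <;> simp_all [eq_comm]

lemma hb_sum_left (c : Fin n ⊕ Fin n → K) (v : Fin n ⊕ Fin n) :
    heisBracket (∑ w, c w • X (Sum.inl w) : MvPolynomial ((Fin n ⊕ Fin n) ⊕ Unit) K)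
      (X (Sum.inl v)) =
      (Sum.elim (fun j => -c (Sum.inr j)) (fun j => c (Sum.inl j)) v) • X (Sum.inr ()) := by
  classical
  rw [← hbL_apply, map_sum]
  simp only [map_smul, hbL_apply]
  rw [Fintype.sum_sum_type]
  cases v with
  | inl j =>
    simp [hb_xx, hb_yx, smul_ite, Finset.sum_ite_eq']
  | inr j =>
    simp [hb_xy, hb_yy, smul_ite, Finset.sum_ite_eq']

lemma pderiv_sum_X (c : Fin n ⊕ Fin n → K) (u : Fin n ⊕ Fin n) :
    pderiv (Sum.inl u) (∑ w, c w • X (Sum.inl w) : MvPolynomial ((Fin n ⊕ Fin n) ⊕ Unit) K) =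
      c u • 1 := by
  classical
  rw [map_sum]
  simp only [Derivation.map_smul, pderiv_X, Pi.single_apply, Sum.inl.injEq, smul_ite, smul_zero]
  rw [Finset.sum_ite_eq']
  simp

lemma deriv_sum_apply {ι : Type*} (s : Finset ι)
    (f : ι → Derivation K (MvPolynomial ((Fin n ⊕ Fin n) ⊕ Unit) K)
      (MvPolynomial ((Fin n ⊕ Fin n) ⊕ Unit) K))
    (p : MvPolynomial ((Fin n ⊕ Fin n) ⊕ Unit) K) :
    (∑ i ∈ s, f i) p = ∑ i ∈ s, f i p := by
  classical
  induction s using Finset.cons_induction with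
  | empty => simp [Derivation.zero_apply]
  | cons i s hi ih =>
    rw [Finset.sum_cons, Finset.sum_cons, Derivation.add_apply, ih]


lemma pderiv_quad_x (Dx Dy : Fin n → MvPolynomial ((Fin n ⊕ Fin n) ⊕ Unit) K)
    (cx cy : Fin n → Fin n ⊕ Fin n → K)
    (hcx : ∀ i, ∑ w, cx i w • X (Sum.inl w) = Dx i)
    (hcy : ∀ i, ∑ w, cy i w • X (Sum.inl w) = Dy i)
    (rel2 : ∀ i j, cy i (Sum.inl j) = cy j (Sum.inl i))
    (rel3 : ∀ i j, cx i (Sum.inl j) = -cy j (Sum.inr i)) (j : Fin n) :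
    pderiv (Sum.inl (Sum.inl j))
      (∑ i, (X (Sum.inl (Sum.inl i)) * Dy i - X (Sum.inl (Sum.inr i)) * Dx i)) = Dy j + Dy j := by
  classical
  have step : ∀ i : Fin n, pderiv (Sum.inl (Sum.inl j))
      (X (Sum.inl (Sum.inl i)) * Dy i - X (Sum.inl (Sum.inr i)) * Dx i)
      = (if i = j then Dy i else 0) +
        (cy i (Sum.inl j) • X (Sum.inl (Sum.inl i)) - cx i (Sum.inl j) • X (Sum.inl (Sum.inr i))) := by
    intro i
    have h1 : pderiv (Sum.inl (Sum.inl j)) (Dy i) = cy i (Sum.inl j) • 1 := by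
      rw [← hcy i, pderiv_sum_X]
    have h2 : pderiv (Sum.inl (Sum.inl j)) (Dx i) = cx i (Sum.inl j) • 1 := by
      rw [← hcx i, pderiv_sum_X]
    rw [map_sub, pderiv_mul, pderiv_mul, h1, h2]
    simp only [pderiv_X, Pi.single_apply, Sum.inl.injEq, Sum.inr.injEq, mul_smul_comm, mul_one]
    split_ifs with hij <;> simp_all <;> abel
  rw [map_sum]
  simp only [step]
  rw [Finset.sum_add_distrib, Finset.sum_ite_eq' Finset.univ j, if_pos (Finset.mem_univ j),
    Finset.sum_sub_distrib]
  have hsum : ((∑ i, cy i (Sum.inl j) • X (Sum.inl (Sum.inl i))) -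
      ∑ i, cx i (Sum.inl j) • X (Sum.inl (Sum.inr i)) :
        MvPolynomial ((Fin n ⊕ Fin n) ⊕ Unit) K) = Dy j := by
    rw [← hcy j, Fintype.sum_sum_type, sub_eq_add_neg]
    congr 1
    · exact Finset.sum_congr rfl fun i _ => by rw [rel2]
    · rw [← Finset.sum_neg_distrib]
      exact Finset.sum_congr rfl fun i _ => by rw [rel3, neg_smul, neg_neg]
  rw [hsum]

lemma pderiv_quad_y (Dx Dy : Fin n → MvPolynomial ((Fin n ⊕ Fin n) ⊕ Unit) K)
    (cx cy : Fin n → Fin n ⊕ Fin n → K)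
    (hcx : ∀ i, ∑ w, cx i w • X (Sum.inl w) = Dx i)
    (hcy : ∀ i, ∑ w, cy i w • X (Sum.inl w) = Dy i)
    (rel1 : ∀ i j, cx i (Sum.inr j) = cx j (Sum.inr i))
    (rel3 : ∀ i j, cx i (Sum.inl j) = -cy j (Sum.inr i)) (j : Fin n) :
    pderiv (Sum.inl (Sum.inr j))
      (∑ i, (X (Sum.inl (Sum.inl i)) * Dy i - X (Sum.inl (Sum.inr i)) * Dx i)) = -Dx j + -Dx j := by
  classical
  have step : ∀ i : Fin n, pderiv (Sum.inl (Sum.inr j))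
      (X (Sum.inl (Sum.inl i)) * Dy i - X (Sum.inl (Sum.inr i)) * Dx i)
      = (if i = j then -Dx i else 0) +
        (cy i (Sum.inr j) • X (Sum.inl (Sum.inl i)) - cx i (Sum.inr j) • X (Sum.inl (Sum.inr i))) := by
    intro i
    have h1 : pderiv (Sum.inl (Sum.inr j)) (Dy i) = cy i (Sum.inr j) • 1 := by
      rw [← hcy i, pderiv_sum_X]
    have h2 : pderiv (Sum.inl (Sum.inr j)) (Dx i) = cx i (Sum.inr j) • 1 := by
      rw [← hcx i, pderiv_sum_X]
    rw [map_sub, pderiv_mul, pderiv_mul, h1, h2]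
    simp only [pderiv_X, Pi.single_apply, Sum.inl.injEq, Sum.inr.injEq, mul_smul_comm, mul_one]
    split_ifs with hij <;> simp_all <;> abel
  rw [map_sum]
  simp only [step]
  rw [Finset.sum_add_distrib, Finset.sum_ite_eq' Finset.univ j, if_pos (Finset.mem_univ j),
    Finset.sum_sub_distrib]
  have hsum : ((∑ i, cy i (Sum.inr j) • X (Sum.inl (Sum.inl i))) -
      ∑ i, cx i (Sum.inr j) • X (Sum.inl (Sum.inr i)) :
        MvPolynomial ((Fin n ⊕ Fin n) ⊕ Unit) K) = -Dx j := by
    rw [← hcx j, Fintype.sum_sum_type, neg_add, sub_eq_add_neg]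
    congr 1
    · rw [← Finset.sum_neg_distrib]
      exact Finset.sum_congr rfl fun i _ => by rw [rel3 j i, neg_smul, neg_neg]
    · exact congrArg Neg.neg (Finset.sum_congr rfl fun i _ => by rw [rel1])
  rw [hsum]


end Lemma24Aux
open Lemma24Aux

theorem lemma_2_4
    (K : Type) [Field K] [CharZero K] (n : ℕ)
    (D : MvPolynomial ((Fin n ⊕ Fin n) ⊕ Unit) K →ₗ[K]
      MvPolynomial ((Fin n ⊕ Fin n) ⊕ Unit) K)
    (hDmul : ∀ a b, D (a * b) = D a * b + a * D b)
    (hDbr : ∀ a b, D (heisBracket a b) = heisBracket (D a) b + heisBracket a (D b))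
    (hDV : ∀ v ∈ Submodule.span K (Set.range fun w : Fin n ⊕ Fin n =>
        (X (Sum.inl w) : MvPolynomial ((Fin n ⊕ Fin n) ⊕ Unit) K)),
      D v ∈ Submodule.span K (Set.range fun w : Fin n ⊕ Fin n =>
        (X (Sum.inl w) : MvPolynomial ((Fin n ⊕ Fin n) ⊕ Unit) K)))    -- D (V) ⊆ V
    (hDz : D (X (Sum.inr ())) = 0) :                                   -- D (z) = 0
    ∃! a : MvPolynomial ((Fin n ⊕ Fin n) ⊕ Unit) K,
      (a ∈ Algebra.adjoin K (Set.range fun w : Fin n ⊕ Fin n =>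
          (X (Sum.inl w) : MvPolynomial ((Fin n ⊕ Fin n) ⊕ Unit) K)) ∧
        constantCoeff a = 0) ∧                                 -- a ∈ V • Sym V
      ∀ P, (X (Sum.inr ()) : MvPolynomial ((Fin n ⊕ Fin n) ⊕ Unit) K) * D P =
        heisBracket a P                                        -- D P = {z⁻¹ a, P}
    := by
  classical
  -- `D` as a derivation
  have hD1 : D 1 = 0 := by
    have h := hDmul 1 1
    simp only [mul_one, one_mul] at h
    exact (left_eq_add.mp h)
  set Dd : Derivation K (MvPolynomial ((Fin n ⊕ Fin n) ⊕ Unit) K)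
      (MvPolynomial ((Fin n ⊕ Fin n) ⊕ Unit) K) :=
    ⟨D, hD1, fun a b => by rw [hDmul, smul_eq_mul, smul_eq_mul]; ring⟩ with hDd
  -- coefficients of `D` on the generators
  have hxmem : ∀ w : Fin n ⊕ Fin n, (X (Sum.inl w) : MvPolynomial ((Fin n ⊕ Fin n) ⊕ Unit) K) ∈
      Submodule.span K (Set.range fun w : Fin n ⊕ Fin n =>
        (X (Sum.inl w) : MvPolynomial ((Fin n ⊕ Fin n) ⊕ Unit) K)) :=
    fun w => Submodule.subset_span ⟨w, rfl⟩
  have hx : ∀ i : Fin n, ∃ c : Fin n ⊕ Fin n → K,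
      ∑ w, c w • (X (Sum.inl w) : MvPolynomial ((Fin n ⊕ Fin n) ⊕ Unit) K)
        = D (X (Sum.inl (Sum.inl i))) :=
    fun i => (Submodule.mem_span_range_iff_exists_fun K).mp (hDV _ (hxmem (Sum.inl i)))
  choose cx hcx using hx
  have hy : ∀ i : Fin n, ∃ c : Fin n ⊕ Fin n → K,
      ∑ w, c w • (X (Sum.inl w) : MvPolynomial ((Fin n ⊕ Fin n) ⊕ Unit) K)
        = D (X (Sum.inl (Sum.inr i))) :=
    fun i => (Submodule.mem_span_range_iff_exists_fun K).mp (hDV _ (hxmem (Sum.inr i)))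
  choose cy hcy using hy
  have hzX : (X (Sum.inr ()) : MvPolynomial ((Fin n ⊕ Fin n) ⊕ Unit) K) ≠ 0 := X_ne_zero _
  have hcancel : ∀ c : K, c • (X (Sum.inr ()) : MvPolynomial ((Fin n ⊕ Fin n) ⊕ Unit) K) = 0 →
      c = 0 := by
    intro c h
    rcases smul_eq_zero.mp h with h3 | h3
    · exact h3
    · exact absurd h3 hzX
  -- the symplectic relations
  have rel1 : ∀ i j, cx i (Sum.inr j) = cx j (Sum.inr i) := by
    intro i j
    have h := hDbr (X (Sum.inl (Sum.inl i))) (X (Sum.inl (Sum.inl j)))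
    rw [hb_xx, map_zero, hb_antisymm (X (Sum.inl (Sum.inl i))), ← hcx i, ← hcx j,
      hb_sum_left, hb_sum_left] at h
    simp only [Sum.elim_inl] at h
    have h2 : (-cx i (Sum.inr j) - -cx j (Sum.inr i)) •
        (X (Sum.inr ()) : MvPolynomial ((Fin n ⊕ Fin n) ⊕ Unit) K) = 0 := by
      rw [sub_smul, sub_eq_add_neg]
      exact h.symm
    have := hcancel _ h2
    linear_combination -this
  have rel2 : ∀ i j, cy i (Sum.inl j) = cy j (Sum.inl i) := by
    intro i j
    have h := hDbr (X (Sum.inl (Sum.inr i))) (X (Sum.inl (Sum.inr j)))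
    rw [hb_yy, map_zero, hb_antisymm (X (Sum.inl (Sum.inr i))), ← hcy i, ← hcy j,
      hb_sum_left, hb_sum_left] at h
    simp only [Sum.elim_inr] at h
    have h2 : (cy i (Sum.inl j) - cy j (Sum.inl i)) •
        (X (Sum.inr ()) : MvPolynomial ((Fin n ⊕ Fin n) ⊕ Unit) K) = 0 := by
      rw [sub_smul, sub_eq_add_neg]
      exact h.symm
    have := hcancel _ h2
    linear_combination this
  have rel3 : ∀ i j, cx i (Sum.inl j) = -cy j (Sum.inr i) := by
    intro i j
    have h := hDbr (X (Sum.inl (Sum.inl i))) (X (Sum.inl (Sum.inr j)))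
    rw [hb_xy, hb_antisymm (X (Sum.inl (Sum.inl i))), ← hcx i, ← hcy j,
      hb_sum_left, hb_sum_left] at h
    have hl : D (if i = j then (X (Sum.inr ()) : MvPolynomial ((Fin n ⊕ Fin n) ⊕ Unit) K)
        else 0) = 0 := by
      split
      · exact hDz
      · exact map_zero D
    rw [hl] at h
    simp only [Sum.elim_inr, Sum.elim_inl] at h
    have h2 : (cx i (Sum.inl j) + cy j (Sum.inr i)) •
        (X (Sum.inr ()) : MvPolynomial ((Fin n ⊕ Fin n) ⊕ Unit) K) = 0 := by
      rw [add_smul]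
      have h3 : (cy j (Sum.inr i)) • (X (Sum.inr ()) : MvPolynomial ((Fin n ⊕ Fin n) ⊕ Unit) K)
          = -((-cy j (Sum.inr i)) • X (Sum.inr ())) := by rw [neg_smul, neg_neg]
      rw [h3]
      exact h.symm
    have := hcancel _ h2
    linear_combination this
  -- the quadratic Hamiltonian
  set q : MvPolynomial ((Fin n ⊕ Fin n) ⊕ Unit) K :=
    ∑ i, (X (Sum.inl (Sum.inl i)) * D (X (Sum.inl (Sum.inr i))) -
      X (Sum.inl (Sum.inr i)) * D (X (Sum.inl (Sum.inl i)))) with hq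
  set a : MvPolynomial ((Fin n ⊕ Fin n) ⊕ Unit) K := (2:K)⁻¹ • q with ha
  have half_half : ∀ u : MvPolynomial ((Fin n ⊕ Fin n) ⊕ Unit) K, (2:K)⁻¹ • (u + u) = u := by
    intro u
    rw [← two_smul K u, smul_smul, inv_mul_cancel₀ (two_ne_zero), one_smul]
  have hax : ∀ j, pderiv (Sum.inl (Sum.inl j)) a = D (X (Sum.inl (Sum.inr j))) := by
    intro j
    rw [ha, Derivation.map_smul, hq,
      pderiv_quad_x _ _ cx cy hcx hcy rel2 rel3 j, half_half]
  have hay : ∀ j, pderiv (Sum.inl (Sum.inr j)) a = -D (X (Sum.inl (Sum.inl j))) := by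
    intro j
    rw [ha, Derivation.map_smul, hq,
      pderiv_quad_y _ _ cx cy hcx hcy rel1 rel3 j]
    rw [show (-D (X (Sum.inl (Sum.inl j))) + -D (X (Sum.inl (Sum.inl j))) :
        MvPolynomial ((Fin n ⊕ Fin n) ⊕ Unit) K) =
      (-D (X (Sum.inl (Sum.inl j)))) + (-D (X (Sum.inl (Sum.inl j)))) from rfl, half_half]
  -- the Hamiltonian derivation of `a`
  set hamD : Derivation K (MvPolynomial ((Fin n ⊕ Fin n) ⊕ Unit) K)
      (MvPolynomial ((Fin n ⊕ Fin n) ⊕ Unit) K) :=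
    ∑ i : Fin n, (pderiv (Sum.inl (Sum.inl i)) a • pderiv (Sum.inl (Sum.inr i)) -
      pderiv (Sum.inl (Sum.inr i)) a • pderiv (Sum.inl (Sum.inl i))) with hhamD
  have hamD_apply : ∀ P, hamD P = ∑ i,
      (pderiv (Sum.inl (Sum.inl i)) a * pderiv (Sum.inl (Sum.inr i)) P -
        pderiv (Sum.inl (Sum.inr i)) a * pderiv (Sum.inl (Sum.inl i)) P) := by
    intro P
    rw [hhamD, deriv_sum_apply]
    exact Finset.sum_congr rfl fun i _ => by
      rw [Derivation.sub_apply, Derivation.smul_apply, Derivation.smul_apply,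
        smul_eq_mul, smul_eq_mul]
  have hpz : ∀ u : Fin n ⊕ Fin n,
      pderiv (Sum.inl u) (X (Sum.inr ()) : MvPolynomial ((Fin n ⊕ Fin n) ⊕ Unit) K) = 0 :=
    fun u => pderiv_X_of_ne (by simp)
  have hDeq : Dd = hamD := by
    apply derivation_ext
    rintro ((j | j) | u)
    · -- x_j
      have h0 : Dd (X (Sum.inl (Sum.inl j))) = D (X (Sum.inl (Sum.inl j))) := rfl
      rw [h0, hamD_apply]
      simp [hax, hay, pderiv_X, Pi.single_apply, Finset.sum_ite_eq']
    · -- y_j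
      have h0 : Dd (X (Sum.inl (Sum.inr j))) = D (X (Sum.inl (Sum.inr j))) := rfl
      rw [h0, hamD_apply]
      simp [hax, hay, pderiv_X, Pi.single_apply, Finset.sum_ite_eq']
    · -- z
      cases u
      have h0 : Dd (X (Sum.inr ())) = D (X (Sum.inr ())) := rfl
      rw [h0, hamD_apply, hDz]
      simp [hpz]
  
  have hmain : ∀ P, (X (Sum.inr ()) : MvPolynomial ((Fin n ⊕ Fin n) ⊕ Unit) K) * D P =
      heisBracket a P := by
    intro P
    have h1 : D P = hamD P := DFunLike.congr_fun hDeq P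
    rw [h1, hamD_apply, heisBracket]
  have hspan_adjoin : ∀ p ∈ Submodule.span K (Set.range fun w : Fin n ⊕ Fin n =>
      (X (Sum.inl w) : MvPolynomial ((Fin n ⊕ Fin n) ⊕ Unit) K)),
      p ∈ Algebra.adjoin K (Set.range fun w : Fin n ⊕ Fin n =>
        (X (Sum.inl w) : MvPolynomial ((Fin n ⊕ Fin n) ⊕ Unit) K)) := by
    intro p hp
    have hle : Submodule.span K (Set.range fun w : Fin n ⊕ Fin n =>
        (X (Sum.inl w) : MvPolynomial ((Fin n ⊕ Fin n) ⊕ Unit) K)) ≤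
        Subalgebra.toSubmodule (Algebra.adjoin K (Set.range fun w : Fin n ⊕ Fin n =>
          (X (Sum.inl w) : MvPolynomial ((Fin n ⊕ Fin n) ⊕ Unit) K))) :=
      Submodule.span_le.mpr fun q hq => Algebra.subset_adjoin hq
    exact hle hp
  have haadj : a ∈ Algebra.adjoin K (Set.range fun w : Fin n ⊕ Fin n =>
      (X (Sum.inl w) : MvPolynomial ((Fin n ⊕ Fin n) ⊕ Unit) K)) := by
    rw [ha, hq]
    exact Subalgebra.smul_mem _ (Subalgebra.sum_mem _ fun i _ => sub_mem
      (mul_mem (hspan_adjoin _ (hxmem (Sum.inl i)))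
        (hspan_adjoin _ (hDV _ (hxmem (Sum.inr i)))))
      (mul_mem (hspan_adjoin _ (hxmem (Sum.inr i)))
        (hspan_adjoin _ (hDV _ (hxmem (Sum.inl i)))))) _
  have hacc : constantCoeff a = 0 := by
    rw [ha, hq, constantCoeff_smul, map_sum]
    simp
  refine ⟨a, ⟨⟨haadj, hacc⟩, hmain⟩, ?_⟩
  rintro a' ⟨⟨hadj', hcc'⟩, hmain'⟩
  have hbz : ∀ P, heisBracket (a' - a) P = 0 := by
    intro P
    have h := (hmain' P).symm.trans (hmain P)
    rw [← hbL_apply, map_sub, hbL_apply, hbL_apply, h, sub_self]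
  have hx0 : ∀ j, pderiv (Sum.inl (Sum.inl j)) (a' - a) = 0 := by
    intro j
    have h := hbz (X (Sum.inl (Sum.inr j)))
    unfold heisBracket at h
    rcases mul_eq_zero.mp h with h | h
    · exact absurd h hzX
    · simpa [pderiv_X, Pi.single_apply] using h
  have hy0 : ∀ j, pderiv (Sum.inl (Sum.inr j)) (a' - a) = 0 := by
    intro j
    have h := hbz (X (Sum.inl (Sum.inl j)))
    unfold heisBracket at h
    rcases mul_eq_zero.mp h with h | h
    · exact absurd h hzX
    · have h2 : pderiv (Sum.inl (Sum.inr j)) a = pderiv (Sum.inl (Sum.inr j)) a' := by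
        simpa [pderiv_X, Pi.single_apply, sub_eq_zero] using h
      rw [map_sub]
      exact sub_eq_zero.mpr h2.symm
  have hsub_adj : a' - a ∈ Algebra.adjoin K (Set.range fun w : Fin n ⊕ Fin n =>
      (X (Sum.inl w) : MvPolynomial ((Fin n ⊕ Fin n) ⊕ Unit) K)) := sub_mem hadj' haadj
  have hsup : a' - a ∈ supported K (Set.range Sum.inl) := by
    rw [supported_eq_adjoin_X]
    have himg : (X '' Set.range Sum.inl : Set (MvPolynomial ((Fin n ⊕ Fin n) ⊕ Unit) K)) =
        Set.range fun w : Fin n ⊕ Fin n => X (Sum.inl w) := by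
      rw [← Set.range_comp]; rfl
    rw [himg]
    exact hsub_adj
  have hz0 : pderiv (Sum.inr ()) (a' - a) = 0 := by
    apply pderiv_eq_zero_of_notMem_vars
    intro hmem
    have h2 := mem_supported.mp hsup hmem
    simp at h2
  have hall : ∀ v, pderiv v (a' - a) = 0 := by
    rintro ((j | j) | u)
    · exact hx0 j
    · exact hy0 j
    · cases u; exact hz0
  have hC := eq_C_of_pderiv_eq_zero hall
  rw [map_sub, hcc', hacc, sub_zero, map_zero] at hC
  exact sub_eq_zero.mp hC
end

section
/- Each Q_i (i = 1,…,m) is a polynomial function on 𝔫* invariant under the coadjoint representation of N, i.e. Q_1,…,Q_m ∈ 𝒜^N. -/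
/-!
Statement 13 (Lemma 2.11 of A.N. Panov, "Reduction of spherical functions").

Setting.  `K` is a field of characteristic zero; `𝔫` is the maximal nilpotent
subalgebra of a split simple Lie algebra over `K`, `N` the corresponding
unipotent subgroup.  `F` is the field `ℱ = K(𝔫*)` of rational functions on
`𝔫*`, on which `N` acts by `K`-algebra automorphisms `act` (the coadjoint
action), and `A` is the subalgebra `𝒜 = K[𝔫*]` of polynomial functions, whose
fraction field is `ℱ` (`hA`); `𝒜` is stable under the action and is integrally
closed (hypothesis `hAic`, used in the paper's proof).

`Z 1, …, Z m ∈ ℱ^N` are the rational `N`-invariants of Proposition 2.6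
attached to the cascade of roots `ξ 1, …, ξ m`.  For each `i`,
`P i = Z 1 ^ k i 1 ⋯ Z m ^ k i m ∈ 𝒜^N` is the lowest coefficient of the
expansion of the `i`-th fundamental spherical function (hypotheses `hPA`,
`hPinv`, `hP`), and `k' i j = k i j` if `gcd (k i 1, …, k i m) = 1` while
`k i j = 2 * k' i j` if this gcd is `2` (hypothesis `hgcd`, Lemma 2.9), so that
either `P i = Q i` or `P i = (Q i)²` where `Q i := Z 1 ^ k' i 1 ⋯ Z m ^ k' i m`.

Conclusion (Lemma 2.11): each `Q i` is a polynomial function invariant under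
the coadjoint representation of `N`, i.e. `Q 1, …, Q m ∈ 𝒜^N`.
-/

theorem lemma_2_11
    (K F : Type) [Field K] [CharZero K] [Field F] [Algebra K F]
    (N : Type) [Group N] (act : N →* (F ≃ₐ[K] F))
    (A : Subalgebra K F)                                  -- 𝒜 = K[𝔫*] inside ℱ = K(𝔫*)
    (hA : ∀ x : F, ∃ a ∈ A, ∃ b ∈ A, b ≠ 0 ∧ x = a / b)   -- ℱ is the fraction field of 𝒜
    (hAact : ∀ (g : N), ∀ a ∈ A, act g a ∈ A)             -- 𝒜 is stable under the action of N
    (hAic : IsIntegrallyClosed A)                         -- 𝒜 is integrally closed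
    (m : ℕ) (Z : Fin m → F)
    (hZne : ∀ j, Z j ≠ 0)
    (hZinv : ∀ (g : N) (j : Fin m), act g (Z j) = Z j)    -- Z j ∈ ℱ^N (Proposition 2.6)
    (k k' : Fin m → Fin m → ℤ)
    (P : Fin m → F)
    (hPA : ∀ i, P i ∈ A)                                  -- P i ∈ 𝒜
    (hPinv : ∀ (g : N) (i : Fin m), act g (P i) = P i)    -- P i ∈ 𝒜^N
    (hP : ∀ i, P i = ∏ j, Z j ^ k i j)                    -- P i = Z₁^{k i 1} ⋯ Z_m^{k i m}
    (hgcd : ∀ i, (∀ j, k' i j = k i j) ∨ (∀ j, k i j = 2 * k' i j)) :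
    ∀ i : Fin m,
      (∏ j, Z j ^ k' i j) ∈ A ∧
      ∀ g : N, act g (∏ j, Z j ^ k' i j) = ∏ j, Z j ^ k' i j := by
  -- F is a fraction field of A
  haveI : IsFractionRing A F := by
    constructor
    constructor
    · rintro ⟨b, hb⟩
      refine IsUnit.of_mul_eq_one ((b : F)⁻¹ • 1 : F) ?_
      have hb0 : (b : F) ≠ 0 := by
        intro h
        have := nonZeroDivisors.ne_zero hb
        apply this
        ext
        simpa using h
      have h1 : (algebraMap A F) b = (b : F) := rfl
      rw [smul_eq_mul, mul_one, h1, mul_inv_cancel₀ hb0]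
    · intro z
      obtain ⟨a, ha, b, hb, hb0, hz⟩ := hA z
      refine ⟨⟨⟨a, ha⟩, ⟨⟨b, hb⟩, ?_⟩⟩, ?_⟩
      · refine mem_nonZeroDivisors_of_ne_zero fun h => hb0 ?_
        exact congrArg Subtype.val h
      · show z * (b : F) = (a : F)
        rw [hz, div_mul_cancel₀ _ hb0]
    · intro a b h
      exact ⟨1, by rw [Subtype.ext h]⟩
  intro i
  constructor
  · rcases hgcd i with h | h
    · have : (∏ j, Z j ^ k' i j) = P i := by
        rw [hP i]
        exact Finset.prod_congr rfl fun j _ => by rw [h j]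
      rw [this]; exact hPA i
    · -- Q² = P, so Q is integral over A, hence in A
      have hsq : (∏ j, Z j ^ k' i j) ^ 2 = P i := by
        rw [hP i, ← Finset.prod_pow]
        refine Finset.prod_congr rfl fun j _ => ?_
        rw [h j, two_mul, zpow_add₀ (hZne j), sq]
      have hint : IsIntegral A (∏ j, Z j ^ k' i j) := by
        apply IsIntegral.of_pow (n := 2) (by norm_num)
        rw [hsq]
        exact isIntegral_algebraMap (x := (⟨P i, hPA i⟩ : A))
      obtain ⟨y, hy⟩ := IsIntegrallyClosed.isIntegral_iff.mp hint
      rw [← hy]; exact y.2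
  · intro g
    rw [map_prod]
    refine Finset.prod_congr rfl fun j _ => ?_
    rw [map_zpow₀, hZinv]
end
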